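/- For every even natural number k ≥ 2 there exists a finite simple graph G with Δ(G) = k, χ(G) = k/2 + 1, vs_χ(G) = 1, and es_χ(G) = 2; in particular, the hypothesis χ(G) > Δ(G)/2 + 1 in the theorem asserting vs_χ(G) = es_χ(G) cannot be weakened to χ(G) ≥ Δ(G)/2 + 1. -/

import Mathlib

open SimpleGraph

/-- The chromatic number of a graph, as a natural number (for finite graphs this
is the usual chromatic number). -/
noncomputable def chromNum {V : Type*} (G : SimpleGraph V) : ℕ :=
  sInf {n : ℕ | G.Colorable n}

/-- The maximum degree Δ(G) of a finite graph. -/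
noncomputable def maxDeg {V : Type*} [Fintype V] (G : SimpleGraph V) : ℕ :=
  Finset.univ.sup fun v => Nat.card (G.neighborSet v)

/-- The chromatic vertex stability number: the minimum number of vertices whose
deletion results in a graph with chromatic number χ(G) − 1. -/
noncomputable def vsChi {V : Type*} [Fintype V] (G : SimpleGraph V) : ℕ :=
  sInf {k : ℕ | ∃ S : Finset V, S.card = k ∧
    chromNum (G.induce ((S : Set V))ᶜ) = chromNum G - 1}

/-- The independent chromatic vertex stability number: the minimum size of an
independent set of vertices whose deletion results in a graph with chromatic
number χ(G) − 1. -/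
noncomputable def ivsChi {V : Type*} [Fintype V] (G : SimpleGraph V) : ℕ :=
  sInf {k : ℕ | ∃ S : Finset V, S.card = k ∧
    (∀ u ∈ S, ∀ v ∈ S, ¬ G.Adj u v) ∧
    chromNum (G.induce ((S : Set V))ᶜ) = chromNum G - 1}

/-- The chromatic edge stability number: the minimum number of edges whose
deletion results in a graph with chromatic number χ(G) − 1. -/
noncomputable def esChi {V : Type*} (G : SimpleGraph V) : ℕ :=
  sInf {k : ℕ | ∃ F : Finset (Sym2 V), ↑F ⊆ G.edgeSet ∧ F.card = k ∧
    chromNum (G.deleteEdges ↑F) = chromNum G - 1}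

/-! ### Auxiliary lemmas -/

/-- Two copies of `K_{m+1}` glued at vertex `0`.  Vertices `0,…,m` form the first
clique, vertices `0, m+1, …, 2m` form the second clique. -/
private def Gr (m : ℕ) : SimpleGraph (Fin (2*m+1)) where
  Adj u v := u ≠ v ∧ ((u.val ≤ m ∧ v.val ≤ m) ∨
    ((u.val = 0 ∨ m < u.val) ∧ (v.val = 0 ∨ m < v.val)))
  symm := by
    constructor
    rintro u v ⟨h1, h2⟩
    exact ⟨h1.symm, by tauto⟩
  loopless := by constructor; rintro v ⟨h, -⟩; exact h rfl

private lemma no_col {V : Type*} {G : SimpleGraph V} {N c : ℕ} (f : Fin N → V)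
    (hf : ∀ i j : Fin N, i ≠ j → G.Adj (f i) (f j)) (hc : c < N) : ¬ G.Colorable c := by
  rintro ⟨col⟩
  have hinj : Function.Injective (fun i => col (f i)) := by
    intro i j hij
    by_contra hne
    exact col.valid (hf i j hne) hij
  have := Fintype.card_le_of_injective _ hinj
  simp only [Fintype.card_fin] at this
  omega

private lemma chromNum_eq {V : Type*} {G : SimpleGraph V} {n : ℕ} (h1 : G.Colorable n)
    (h2 : ¬ G.Colorable (n-1)) : chromNum G = n := by
  refine le_antisymm (Nat.sInf_le h1) (le_csInf ⟨n, h1⟩ ?_)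
  intro j hj
  by_contra h
  push_neg at h
  exact h2 ((hj : G.Colorable j).mono (by omega))

private lemma chromNum_ne {V : Type*} {G : SimpleGraph V} {n : ℕ} (hn : 1 ≤ n)
    (h : ¬ G.Colorable n) : chromNum G ≠ n := by
  intro he
  rcases Set.eq_empty_or_nonempty {j : ℕ | G.Colorable j} with h0 | h0
  · rw [chromNum, h0, Nat.sInf_empty] at he; omega
  · have hmem := Nat.sInf_mem h0
    rw [show sInf {j : ℕ | G.Colorable j} = chromNum G from rfl, he] at hmem
    exact h hmem

private lemma Gr_colorable (m : ℕ) : (Gr m).Colorable (m+1) := by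
  refine ⟨Coloring.mk
    (fun v => ⟨if v.val ≤ m then v.val else v.val - m,
      by have := v.isLt; split_ifs <;> omega⟩) ?_⟩
  rintro u v ⟨hne, hadj⟩ hcol
  have hne' : u.val ≠ v.val := fun h => hne (Fin.ext h)
  have hu := u.isLt
  have hv := v.isLt
  rw [Fin.mk.injEq] at hcol
  split_ifs at hcol <;> omega

private lemma Gr_not_colorable (m : ℕ) : ¬ (Gr m).Colorable m := by
  refine no_col (G := Gr m) (fun i : Fin (m+1) => ⟨i.val, by have := i.isLt; omega⟩) ?_ (by omega)
  intro i j hij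
  have hi := i.isLt
  have hj := j.isLt
  exact ⟨fun h => hij (Fin.ext (by simpa [Fin.ext_iff] using h)),
    Or.inl ⟨(by omega : i.val ≤ m), (by omega : j.val ≤ m)⟩⟩

private lemma Gr_chromNum (m : ℕ) : chromNum (Gr m) = m + 1 :=
  chromNum_eq (Gr_colorable m) (by simpa using Gr_not_colorable m)

private lemma Gr_maxDeg (m : ℕ) : maxDeg (Gr m) = 2*m := by
  classical
  have hcompl : ∀ v : Fin (2*m+1), ({v}ᶜ : Set (Fin (2*m+1))).ncard = 2*m := by
    intro v
    have h2 := Set.ncard_add_ncard_compl ({v} : Set (Fin (2*m+1)))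
    rw [Set.ncard_singleton, Nat.card_eq_fintype_card, Fintype.card_fin] at h2
    omega
  have hub : ∀ v : Fin (2*m+1), Nat.card ((Gr m).neighborSet v) ≤ 2*m := by
    intro v
    rw [Nat.card_coe_set_eq]
    have hsub : (Gr m).neighborSet v ⊆ {v}ᶜ := by
      intro u hu
      simp only [Set.mem_compl_iff, Set.mem_singleton_iff]
      intro h
      exact (Gr m).irrefl (h ▸ hu)
    calc ((Gr m).neighborSet v).ncard ≤ ({v}ᶜ : Set (Fin (2*m+1))).ncard :=
          Set.ncard_le_ncard hsub (Set.toFinite _)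
      _ = 2*m := hcompl v
  set z : Fin (2*m+1) := ⟨0, by omega⟩ with hz
  have hset : (Gr m).neighborSet z = ({z}ᶜ : Set (Fin (2*m+1))) := by
    ext u
    simp only [mem_neighborSet, Set.mem_compl_iff, Set.mem_singleton_iff]
    constructor
    · rintro ⟨h, -⟩ hu
      exact h hu.symm
    · intro hu
      refine ⟨fun h => hu h.symm, ?_⟩
      rcases le_or_gt u.val m with h | h
      · exact Or.inl ⟨by simp [hz], h⟩
      · exact Or.inr ⟨Or.inl (by simp [hz]), Or.inr h⟩
  have hlb : Nat.card ((Gr m).neighborSet z) = 2*m := by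
    rw [hset, Nat.card_coe_set_eq, hcompl z]
  refine le_antisymm (Finset.sup_le fun v _ => hub v) ?_
  calc 2*m = Nat.card ((Gr m).neighborSet z) := hlb.symm
    _ ≤ maxDeg (Gr m) :=
        Finset.le_sup (f := fun v => Nat.card ((Gr m).neighborSet v)) (Finset.mem_univ z)

/-! ### Vertex stability -/

private lemma Gr_vsChi (m : ℕ) (hm : 1 ≤ m) : vsChi (Gr m) = 1 := by
  classical
  set z : Fin (2*m+1) := ⟨0, by omega⟩ with hz
  have hzval : z.val = 0 := rfl
  -- deleting vertex 0 works
  have hmem1 : (1 : ℕ) ∈ {k : ℕ | ∃ S : Finset (Fin (2*m+1)), S.card = k ∧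
      chromNum ((Gr m).induce ((S : Set (Fin (2*m+1))))ᶜ) = chromNum (Gr m) - 1} := by
    refine ⟨{z}, Finset.card_singleton z, ?_⟩
    rw [Gr_chromNum]
    have hval0 : ∀ a : ((({z} : Finset (Fin (2*m+1))) : Set (Fin (2*m+1)))ᶜ : Set (Fin (2*m+1))),
        (a : Fin (2*m+1)).val ≠ 0 := by
      rintro ⟨a, ha⟩ h
      simp only [Finset.coe_singleton, Set.mem_compl_iff, Set.mem_singleton_iff] at ha
      exact ha (Fin.ext (by simpa [hzval] using h))
    have hcol : ((Gr m).induce ((({z} : Finset (Fin (2*m+1))) : Set (Fin (2*m+1))))ᶜ).Colorable m := by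
      refine ⟨Coloring.mk
        (fun a => ⟨if (a : Fin (2*m+1)).val ≤ m then (a : Fin (2*m+1)).val - 1
            else (a : Fin (2*m+1)).val - m - 1,
          by have := (a : Fin (2*m+1)).isLt; have := hval0 a; split_ifs <;> omega⟩) ?_⟩
      rintro u v huv hcol
      obtain ⟨hne, hadj⟩ : (Gr m).Adj (u : Fin (2*m+1)) (v : Fin (2*m+1)) := huv
      have hne' : (u : Fin (2*m+1)).val ≠ (v : Fin (2*m+1)).val := fun h => hne (Fin.ext h)
      have hu := (u : Fin (2*m+1)).isLt
      have hv := (v : Fin (2*m+1)).isLt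
      have h0u := hval0 u
      have h0v := hval0 v
      rw [Fin.mk.injEq] at hcol
      split_ifs at hcol <;> omega
    have hncol : ¬ ((Gr m).induce ((({z} : Finset (Fin (2*m+1))) : Set (Fin (2*m+1))))ᶜ).Colorable (m-1) := by
      refine no_col (fun i : Fin m =>
        ⟨⟨i.val + 1, by have := i.isLt; omega⟩, by
          simp only [Finset.coe_singleton, Set.mem_compl_iff, Set.mem_singleton_iff]
          intro h
          have := congrArg Fin.val h
          simp [hzval] at this⟩) ?_ (by omega)
      intro i j hij
      have hi := i.isLt
      have hj := j.isLt
      refine ⟨?_, Or.inl ⟨(by omega : i.val + 1 ≤ m), (by omega : j.val + 1 ≤ m)⟩⟩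
      intro h
      have : i.val + 1 = j.val + 1 := congrArg (fun x => (x : Fin (2*m+1)).val) h
      exact hij (Fin.ext (by omega))
    have := chromNum_eq hcol hncol
    omega
  refine le_antisymm (Nat.sInf_le hmem1) (le_csInf ⟨1, hmem1⟩ ?_)
  rintro j ⟨S, hcard, heq⟩
  rcases Nat.eq_zero_or_pos j with rfl | hj
  · exfalso
    have hS : S = ∅ := Finset.card_eq_zero.mp hcard
    subst hS
    rw [Gr_chromNum] at heq
    have hncol : ¬ ((Gr m).induce (((∅ : Finset (Fin (2*m+1))) : Set (Fin (2*m+1))))ᶜ).Colorable m := by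
      refine no_col (fun i : Fin (m+1) =>
        ⟨⟨i.val, by have := i.isLt; omega⟩, by simp⟩) ?_ (by omega)
      intro i j hij
      have hi := i.isLt
      have hj := j.isLt
      refine ⟨?_, Or.inl ⟨(by omega : i.val ≤ m), (by omega : j.val ≤ m)⟩⟩
      intro h
      have : i.val = j.val := congrArg (fun x => (x : Fin (2*m+1)).val) h
      exact hij (Fin.ext this)
    exact chromNum_ne hm hncol heq
  · exact hj

/-! ### Edge stability -/

private lemma exists_clique_avoid (m : ℕ) (hm : 1 ≤ m) (a b : Fin (2*m+1))
    (hab : (Gr m).Adj a b) :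
    ∃ f : Fin (m+1) → Fin (2*m+1),
      ∀ i j : Fin (m+1), i ≠ j → (Gr m).Adj (f i) (f j) ∧ s(f i, f j) ≠ s(a, b) := by
  obtain ⟨hne, hadj⟩ := hab
  have hne' : a.val ≠ b.val := fun h => hne (Fin.ext h)
  have ha2 := a.isLt
  have hb2 := b.isLt
  by_cases hP : (1 ≤ a.val ∧ a.val ≤ m) ∨ (1 ≤ b.val ∧ b.val ≤ m)
  · -- use the second clique {0} ∪ {m+1,…,2m}
    refine ⟨fun i => ⟨if i.val = 0 then 0 else m + i.val, by have := i.isLt; split_ifs <;> omega⟩,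
      ?_⟩
    intro i j hij
    have hi := i.isLt
    have hj := j.isLt
    have hij' : i.val ≠ j.val := fun h => hij (Fin.ext h)
    constructor
    · refine ⟨?_, Or.inr ⟨?_, ?_⟩⟩
      · intro h
        rw [Fin.mk.injEq] at h
        split_ifs at h <;> omega
      · show (if (i:ℕ) = 0 then 0 else m + (i:ℕ)) = 0 ∨ m < (if (i:ℕ) = 0 then 0 else m + (i:ℕ))
        split_ifs <;> omega
      · show (if (j:ℕ) = 0 then 0 else m + (j:ℕ)) = 0 ∨ m < (if (j:ℕ) = 0 then 0 else m + (j:ℕ))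
        split_ifs <;> omega
    · intro h
      rw [Sym2.eq_iff] at h
      rcases h with ⟨h1, h2⟩ | ⟨h1, h2⟩
      · have e1 : (if (i:ℕ) = 0 then 0 else m + (i:ℕ)) = a.val := Fin.ext_iff.mp h1
        have e2 : (if (j:ℕ) = 0 then 0 else m + (j:ℕ)) = b.val := Fin.ext_iff.mp h2
        split_ifs at e1 e2 <;> omega
      · have e1 : (if (i:ℕ) = 0 then 0 else m + (i:ℕ)) = b.val := Fin.ext_iff.mp h1
        have e2 : (if (j:ℕ) = 0 then 0 else m + (j:ℕ)) = a.val := Fin.ext_iff.mp h2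
        split_ifs at e1 e2 <;> omega
  · -- both endpoints lie in {0} ∪ {m+1,…,2m}; use the first clique {0,…,m}
    push_neg at hP
    refine ⟨fun i => ⟨i.val, by have := i.isLt; omega⟩, ?_⟩
    intro i j hij
    have hi := i.isLt
    have hj := j.isLt
    have hij' : i.val ≠ j.val := fun h => hij (Fin.ext h)
    constructor
    · exact ⟨fun h => hij' (by simpa [Fin.ext_iff] using h),
        Or.inl ⟨(by omega : i.val ≤ m), (by omega : j.val ≤ m)⟩⟩
    · intro h
      rw [Sym2.eq_iff] at h
      obtain ⟨hPa, hPb⟩ := hP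
      rcases h with ⟨h1, h2⟩ | ⟨h1, h2⟩
      · have e1 : (i : ℕ) = a.val := Fin.ext_iff.mp h1
        have e2 : (j : ℕ) = b.val := Fin.ext_iff.mp h2
        rcases hadj with ⟨-, -⟩ | ⟨ha | ha, hb | hb⟩ <;> omega
      · have e1 : (i : ℕ) = b.val := Fin.ext_iff.mp h1
        have e2 : (j : ℕ) = a.val := Fin.ext_iff.mp h2
        rcases hadj with ⟨-, -⟩ | ⟨ha | ha, hb | hb⟩ <;> omega

private lemma delete_not_colorable (m : ℕ) (hm : 1 ≤ m) (F : Finset (Sym2 (Fin (2*m+1))))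
    (hF : ↑F ⊆ (Gr m).edgeSet) (hcard : F.card ≤ 1) :
    ¬ ((Gr m).deleteEdges ↑F).Colorable m := by
  obtain ⟨a, b, hab, hall⟩ : ∃ a b, (Gr m).Adj a b ∧ ∀ e ∈ F, e = s(a, b) := by
    rcases Nat.lt_or_ge F.card 1 with h | h
    · have hF0 : F = ∅ := Finset.card_eq_zero.mp (by omega)
      subst hF0
      refine ⟨⟨0, by omega⟩, ⟨1, by omega⟩, ⟨?_, Or.inl ⟨by simp, by simpa using hm⟩⟩, by simp⟩
      intro h
      have := congrArg Fin.val h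
      simp at this
    · have h1 : F.card = 1 := le_antisymm hcard h
      obtain ⟨e, he⟩ := Finset.card_eq_one.mp h1
      subst he
      induction e using Sym2.ind with
      | _ a b =>
        have hmem : s(a, b) ∈ (Gr m).edgeSet := hF (by simp)
        exact ⟨a, b, (Gr m).mem_edgeSet.mp hmem, by simp⟩
  obtain ⟨f, hf⟩ := exists_clique_avoid m hm a b hab
  refine no_col f ?_ (by omega)
  intro i j hij
  rw [deleteEdges_adj]
  exact ⟨(hf i j hij).1, fun hm2 => (hf i j hij).2 (hall _ hm2)⟩

private lemma Gr_esChi (m : ℕ) (hm : 1 ≤ m) : esChi (Gr m) = 2 := by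
  classical
  set z : Fin (2*m+1) := ⟨0, by omega⟩ with hz
  set o : Fin (2*m+1) := ⟨1, by omega⟩ with ho
  set w : Fin (2*m+1) := ⟨m+1, by omega⟩ with hw
  set F : Finset (Sym2 (Fin (2*m+1))) := {s(z, o), s(z, w)} with hF
  have hsub : ↑F ⊆ (Gr m).edgeSet := by
    intro e he
    simp only [hF, Finset.coe_insert, Finset.coe_singleton, Set.mem_insert_iff,
      Set.mem_singleton_iff] at he
    rcases he with rfl | rfl
    · refine (Gr m).mem_edgeSet.mpr ⟨?_, Or.inl ⟨by simp [hz], by simp [ho]; omega⟩⟩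
      intro h
      have := congrArg Fin.val h
      simp [hz, ho] at this
    · refine (Gr m).mem_edgeSet.mpr ⟨?_, Or.inr ⟨Or.inl (by simp [hz]), Or.inr (by simp [hw])⟩⟩
      intro h
      have := congrArg Fin.val h
      simp [hz, hw] at this
  have hcard2 : F.card = 2 := by
    refine Finset.card_pair ?_
    intro hco
    rw [Sym2.eq_iff] at hco
    rcases hco with ⟨h1, h2⟩ | ⟨h1, h2⟩
    · have := congrArg Fin.val h2
      simp [ho, hw] at this
      omega
    · have := congrArg Fin.val h1
      simp [hz, hw] at this
  have hcol : ((Gr m).deleteEdges ↑F).Colorable m := by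
    refine ⟨Coloring.mk
      (fun v => ⟨if v.val = 0 then 0 else if v.val ≤ m then v.val - 1 else v.val - m - 1,
        by have := v.isLt; split_ifs <;> omega⟩) ?_⟩
    rintro u v huv hcol
    rw [deleteEdges_adj] at huv
    obtain ⟨⟨hne, hadj⟩, hnm⟩ := huv
    have hne' : u.val ≠ v.val := fun h => hne (Fin.ext h)
    have hu := u.isLt
    have hv := v.isLt
    have key : ∀ x y : Fin (2*m+1), x.val = 0 →
        (y.val = 1 ∨ y.val = m + 1) → s(x, y) ∈ (↑F : Set (Sym2 (Fin (2*m+1)))) := by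
      intro x y hx hy
      have hxz : x = z := Fin.ext (by simp [hz, hx])
      simp only [hF, Finset.coe_insert, Finset.coe_singleton, Set.mem_insert_iff,
        Set.mem_singleton_iff]
      rcases hy with hy | hy
      · exact Or.inl (by rw [hxz, show y = o from Fin.ext (by simp [ho, hy])])
      · exact Or.inr (by rw [hxz, show y = w from Fin.ext (by simp [hw, hy])])
    have h1 : ¬ (u.val = 0 ∧ (v.val = 1 ∨ v.val = m + 1)) := by
      rintro ⟨hx, hy⟩
      exact hnm (key u v hx hy)
    have h2 : ¬ (v.val = 0 ∧ (u.val = 1 ∨ u.val = m + 1)) := by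
      rintro ⟨hx, hy⟩
      exact hnm (by rw [Sym2.eq_swap]; exact key v u hx hy)
    rw [Fin.mk.injEq] at hcol
    split_ifs at hcol <;> omega
  have hncol : ¬ ((Gr m).deleteEdges ↑F).Colorable (m-1) := by
    refine no_col (fun i : Fin m => ⟨i.val + 1, by have := i.isLt; omega⟩) ?_ (by omega)
    intro i j hij
    have hi := i.isLt
    have hj := j.isLt
    rw [deleteEdges_adj]
    refine ⟨⟨fun h => hij (Fin.ext (by simpa [Fin.ext_iff] using h)),
      Or.inl ⟨(by omega : i.val + 1 ≤ m), (by omega : j.val + 1 ≤ m)⟩⟩, ?_⟩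
    intro hmem
    simp only [hF, Finset.coe_insert, Finset.coe_singleton, Set.mem_insert_iff,
      Set.mem_singleton_iff, Sym2.eq_iff] at hmem
    rcases hmem with (⟨h1, -⟩ | ⟨-, h2⟩) | (⟨h1, -⟩ | ⟨-, h2⟩)
    · have h1' : (i:ℕ) + 1 = 0 := Fin.ext_iff.mp h1
      omega
    · have h2' : (j:ℕ) + 1 = 0 := Fin.ext_iff.mp h2
      omega
    · have h1' : (i:ℕ) + 1 = 0 := Fin.ext_iff.mp h1
      omega
    · have h2' : (j:ℕ) + 1 = 0 := Fin.ext_iff.mp h2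
      omega
  have hchrom : chromNum ((Gr m).deleteEdges ↑F) = m := chromNum_eq hcol hncol
  have hmem2 : (2 : ℕ) ∈ {k : ℕ | ∃ F : Finset (Sym2 (Fin (2*m+1))), ↑F ⊆ (Gr m).edgeSet ∧
      F.card = k ∧ chromNum ((Gr m).deleteEdges ↑F) = chromNum (Gr m) - 1} := by
    exact ⟨F, hsub, hcard2, by rw [hchrom, Gr_chromNum]; omega⟩
  refine le_antisymm (Nat.sInf_le hmem2) (le_csInf ⟨2, hmem2⟩ ?_)
  rintro j ⟨F', hsub', hcard', heq'⟩
  by_contra hlt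
  push_neg at hlt
  have hc1 : F'.card ≤ 1 := by omega
  rw [Gr_chromNum] at heq'
  exact chromNum_ne hm (delete_not_colorable m hm F' hsub' hc1) heq'

/-- For every even natural number $k ≥ 2$ there exists a finite simple graph
$G$ with $Δ(G) = k$, $χ(G) = k/2 + 1$, $vs_χ(G) = 1$, and $es_χ(G) = 2$. -/
theorem stmt_13 (k : ℕ) (hk : 2 ≤ k) (heven : Even k) :
    ∃ (n : ℕ) (G : SimpleGraph (Fin n)),
      maxDeg G = k ∧ 2 * chromNum G = k + 2 ∧
      vsChi G = 1 ∧ esChi G = 2 := by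
  obtain ⟨r, rfl⟩ := heven
  have hm : 1 ≤ r := by omega
  have h2r : r + r = 2 * r := by ring
  refine ⟨2*r+1, Gr r, ?_, ?_, Gr_vsChi r hm, Gr_esChi r hm⟩
  · rw [Gr_maxDeg]; omega
  · rw [Gr_chromNum]; omega
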